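/- Let M ∈ ℝ^{d×d} be symmetric positive semidefinite of rank r−1 with smallest nonzero eigenvalue λ, let S = M + σ̄² I_d where 0 ≤ σ̄² ≤ σ_max², and let Ŝ ∈ ℝ^{d×d} be symmetric with operator norm ‖Ŝ − S‖ ≤ ε. If λ > 5(σ_max² + ε), then for every vector v in the column span of M, the orthogonal projection of v onto the span of the top r−1 eigenvectors of Ŝ has Euclidean norm at least ‖v‖/2; equivalently, if U_{r−1} ∈ ℝ^{d×(r−1)} has the top r−1 orthonormal eigenvectors of Ŝ as columns, then ‖U_{r−1}ᵀ v‖ ≥ ‖v‖/2. -/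

import Mathlib

open Matrix

noncomputable section

/-- `U` consists of (orthonormal) top-`m` eigenvectors of the symmetric matrix `S`:
the columns of `U` are orthonormal eigenvectors of `S`, whose eigenvalues dominate the
Rayleigh quotient of `S` on the orthogonal complement of the column span of `U`. -/
def IsTopEigenvectors {d m : ℕ} (S : Matrix (Fin d) (Fin d) ℝ)
    (U : Matrix (Fin d) (Fin m) ℝ) : Prop :=
  Uᵀ * U = 1 ∧
    ∃ θ : Fin m → ℝ,
      (∀ j, S.mulVec (fun i => U i j) = θ j • fun i => U i j) ∧
        ∀ w : Fin d → ℝ, (∀ j, (fun i => U i j) ⬝ᵥ w = 0) →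
          ∀ j, w ⬝ᵥ S.mulVec w ≤ θ j * (w ⬝ᵥ w)


lemma dot_self_nonneg {d : ℕ} (x : Fin d → ℝ) : 0 ≤ x ⬝ᵥ x :=
  Finset.sum_nonneg fun i _ => mul_self_nonneg _

lemma abs_dot_le {d : ℕ} (x y : Fin d → ℝ) :
    |x ⬝ᵥ y| ≤ Real.sqrt (x ⬝ᵥ x) * Real.sqrt (y ⬝ᵥ y) := by
  have h := Finset.sum_mul_sq_le_sq_mul_sq Finset.univ x y
  have : (x ⬝ᵥ y)^2 ≤ (x ⬝ᵥ x) * (y ⬝ᵥ y) := by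
    simpa [dotProduct, pow_two] using h
  calc |x ⬝ᵥ y| = Real.sqrt ((x ⬝ᵥ y)^2) := (Real.sqrt_sq_eq_abs _).symm
    _ ≤ Real.sqrt ((x ⬝ᵥ x) * (y ⬝ᵥ y)) := Real.sqrt_le_sqrt this
    _ = _ := Real.sqrt_mul (dot_self_nonneg x) _

lemma mulVec_U_dot {d m : ℕ} (U : Matrix (Fin d) (Fin m) ℝ) (hU : Uᵀ * U = 1)
    (c e : Fin m → ℝ) : (U *ᵥ c) ⬝ᵥ (U *ᵥ e) = c ⬝ᵥ e := by
  rw [dotProduct_mulVec, ← mulVec_transpose, mulVec_mulVec, hU, one_mulVec]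

lemma quad_lb {d : ℕ} {M : Matrix (Fin d) (Fin d) ℝ} (hM : M.PosSemidef) {lam : ℝ}
    (hlam0 : 0 < lam) (hgap : ∀ i, hM.1.eigenvalues i = 0 ∨ lam ≤ hM.1.eigenvalues i)
    (x y : Fin d → ℝ) :
    2 * lam * (x ⬝ᵥ M *ᵥ y) ≤ x ⬝ᵥ M *ᵥ x + lam * ((M *ᵥ y) ⬝ᵥ (M *ᵥ y)) := by
  set V : Matrix (Fin d) (Fin d) ℝ := (hM.1.eigenvectorUnitary : Matrix (Fin d) (Fin d) ℝ) with hV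
  set μ : Fin d → ℝ := hM.1.eigenvalues with hμ
  have hst : star V = Vᵀ := conjTranspose_eq_transpose_of_trivial V
  have hdiag : diagonal (RCLike.ofReal ∘ μ) = diagonal μ := by
    rw [RCLike.ofReal_real_eq_id]; rfl
  have hspec : M = V * diagonal μ * Vᵀ := by
    rw [← hst, ← hdiag]; exact hM.1.spectral_theorem
  have hVV : Vᵀ * V = 1 := by
    rw [← hst]; exact (Matrix.mem_unitaryGroup_iff').mp hM.1.eigenvectorUnitary.2
  set p := Vᵀ *ᵥ x with hp
  set q := Vᵀ *ᵥ y with hq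
  have key : ∀ z w : Fin d → ℝ, z ⬝ᵥ M *ᵥ w = (Vᵀ *ᵥ z) ⬝ᵥ (diagonal μ *ᵥ (Vᵀ *ᵥ w)) := by
    intro z w
    rw [hspec, ← mulVec_mulVec, ← mulVec_mulVec, dotProduct_mulVec, ← mulVec_transpose]
  have h1 : x ⬝ᵥ M *ᵥ x = ∑ i, μ i * p i ^ 2 := by
    rw [key]; simp only [dotProduct, mulVec_diagonal]
    exact Finset.sum_congr rfl fun i _ => by rw [hp]; ring
  have h2 : x ⬝ᵥ M *ᵥ y = ∑ i, μ i * (p i * q i) := by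
    rw [key]; simp only [dotProduct, mulVec_diagonal]
    exact Finset.sum_congr rfl fun i _ => by rw [hp, hq]; ring
  have h3 : (M *ᵥ y) ⬝ᵥ (M *ᵥ y) = ∑ i, μ i ^ 2 * q i ^ 2 := by
    have hMy : M *ᵥ y = V *ᵥ (diagonal μ *ᵥ q) := by
      rw [hspec, ← mulVec_mulVec, ← mulVec_mulVec, hq]
    rw [hMy, mulVec_U_dot V hVV]
    simp only [dotProduct, mulVec_diagonal]
    exact Finset.sum_congr rfl fun i _ => by ring
  rw [h1, h2, h3, Finset.mul_sum, Finset.mul_sum, ← Finset.sum_add_distrib]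
  refine Finset.sum_le_sum fun i _ => ?_
  rcases hgap i with h | h
  · simp [h]
  · nlinarith [sq_nonneg (p i - lam * q i), sq_nonneg (q i), mul_nonneg (mul_nonneg hlam0.le (sub_nonneg.2 h)) (sq_nonneg (q i))]


lemma dot_self_nonneg' {d : ℕ} (x : Fin d → ℝ) : 0 ≤ x ⬝ᵥ x :=
  Finset.sum_nonneg fun _ _ => mul_self_nonneg _

lemma dot_self_pos {d : ℕ} {x : Fin d → ℝ} (hx : x ≠ 0) : 0 < x ⬝ᵥ x := by
  rcases (dot_self_nonneg' x).lt_or_eq with h | h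
  · exact h
  · exact absurd ((dotProduct_self_eq_zero).mp h.symm) hx

lemma kernel_witness {d m : ℕ} (M : Matrix (Fin d) (Fin d) ℝ) (hrank : M.rank = m)
    (U : Matrix (Fin d) (Fin m) ℝ) (w : Fin d → ℝ) :
    ∃ c : Fin m → ℝ, ∃ t : ℝ, (c, t) ≠ 0 ∧ M *ᵥ (U *ᵥ c + t • w) = 0 := by
  set F : ((Fin m → ℝ) × ℝ) →ₗ[ℝ] (Fin d → ℝ) :=
    U.mulVecLin.comp (LinearMap.fst ℝ (Fin m → ℝ) ℝ) +
      LinearMap.smulRight (LinearMap.snd ℝ (Fin m → ℝ) ℝ) w with hF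
  set L : ((Fin m → ℝ) × ℝ) →ₗ[ℝ] (Fin d → ℝ) := M.mulVecLin.comp F with hL
  have hninj : ¬ Function.Injective L := by
    intro hinj
    have h1 : Module.finrank ℝ ((Fin m → ℝ) × ℝ) = Module.finrank ℝ (LinearMap.range L) :=
      (LinearMap.finrank_range_of_inj hinj).symm
    have h2 : Module.finrank ℝ (LinearMap.range L) ≤
        Module.finrank ℝ (LinearMap.range M.mulVecLin) :=
      Submodule.finrank_mono (LinearMap.range_comp_le_range F M.mulVecLin)
    rw [Module.finrank_prod, Module.finrank_fin_fun, Module.finrank_self] at h1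
    have h3 : Module.finrank ℝ (LinearMap.range M.mulVecLin) = m := hrank ▸ rfl
    omega
  rw [Function.not_injective_iff] at hninj
  obtain ⟨x, y, hxy, hne⟩ := hninj
  refine ⟨x.1 - y.1, x.2 - y.2, ?_, ?_⟩
  · intro h
    apply hne
    have h1 : x.1 = y.1 := by have := congrArg Prod.fst h; simpa [sub_eq_zero] using this
    have h2 : x.2 = y.2 := by have := congrArg Prod.snd h; simpa [sub_eq_zero] using this
    exact Prod.ext h1 h2
  · have : L (x - y) = 0 := by rw [map_sub, hxy, sub_self]
    simpa [hL, hF, Matrix.mulVecLin_apply, Matrix.mulVec_add, Matrix.mulVec_smul] using this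

lemma abs_dot_le' {d : ℕ} (x y : Fin d → ℝ) :
    |x ⬝ᵥ y| ≤ Real.sqrt (x ⬝ᵥ x) * Real.sqrt (y ⬝ᵥ y) := by
  have h := Finset.sum_mul_sq_le_sq_mul_sq Finset.univ x y
  have h2 : (x ⬝ᵥ y)^2 ≤ (x ⬝ᵥ x) * (y ⬝ᵥ y) := by
    simpa [dotProduct, pow_two] using h
  calc |x ⬝ᵥ y| = Real.sqrt ((x ⬝ᵥ y)^2) := (Real.sqrt_sq_eq_abs _).symm
    _ ≤ Real.sqrt ((x ⬝ᵥ x) * (y ⬝ᵥ y)) := Real.sqrt_le_sqrt h2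
    _ = _ := Real.sqrt_mul (dot_self_nonneg' x) _

/-- error form bound: `z ⬝ E z ≤ ε (z ⬝ z)` from the operator-norm-style hypothesis. -/
lemma err_bound {d : ℕ} (E : Matrix (Fin d) (Fin d) ℝ) (ε : ℝ)
    (hop : ∀ v : Fin d → ℝ,
      Real.sqrt (E *ᵥ v ⬝ᵥ E *ᵥ v) ≤ ε * Real.sqrt (v ⬝ᵥ v))
    (z : Fin d → ℝ) : |z ⬝ᵥ E *ᵥ z| ≤ ε * (z ⬝ᵥ z) := by
  have h1 := abs_dot_le' z (E *ᵥ z)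
  have h2 := hop z
  have h3 : (0:ℝ) ≤ Real.sqrt (z ⬝ᵥ z) := Real.sqrt_nonneg _
  have h4 : Real.sqrt (z ⬝ᵥ z) * Real.sqrt (z ⬝ᵥ z) = z ⬝ᵥ z :=
    Real.mul_self_sqrt (dot_self_nonneg' z)
  calc |z ⬝ᵥ E *ᵥ z| ≤ Real.sqrt (z ⬝ᵥ z) * Real.sqrt (E *ᵥ z ⬝ᵥ E *ᵥ z) := h1
    _ ≤ Real.sqrt (z ⬝ᵥ z) * (ε * Real.sqrt (z ⬝ᵥ z)) := by
        exact mul_le_mul_of_nonneg_left h2 h3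
    _ = ε * (Real.sqrt (z ⬝ᵥ z) * Real.sqrt (z ⬝ᵥ z)) := by ring
    _ = ε * (z ⬝ᵥ z) := by rw [h4]

lemma rayleigh_small {d m : ℕ} (M S Shat : Matrix (Fin d) (Fin d) ℝ)
    (hrank : M.rank = m) (sbar2 ε : ℝ)
    (hS : S = M + sbar2 • (1 : Matrix (Fin d) (Fin d) ℝ))
    (hShat : Shat.IsSymm)
    (hop : ∀ v : Fin d → ℝ,
      Real.sqrt ((Shat - S) *ᵥ v ⬝ᵥ (Shat - S) *ᵥ v) ≤ ε * Real.sqrt (v ⬝ᵥ v))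
    (U : Matrix (Fin d) (Fin m) ℝ) (hUU : Uᵀ * U = 1)
    (θ : Fin m → ℝ) (hθ : ∀ j, Shat *ᵥ (fun i => U i j) = θ j • fun i => U i j)
    (hdom : ∀ w : Fin d → ℝ, (∀ j, (fun i => U i j) ⬝ᵥ w = 0) →
      ∀ j, w ⬝ᵥ Shat *ᵥ w ≤ θ j * (w ⬝ᵥ w))
    (w : Fin d → ℝ) (hw : ∀ j, (fun i => U i j) ⬝ᵥ w = 0) :
    w ⬝ᵥ Shat *ᵥ w ≤ (sbar2 + ε) * (w ⬝ᵥ w) := by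
  by_cases hw0 : w = 0
  · simp [hw0]
  by_contra hcon
  push_neg at hcon
  set s : ℝ := sbar2 + ε with hs
  have hwpos : 0 < w ⬝ᵥ w := dot_self_pos hw0
  have hθ' : ∀ j, s < θ j := fun j => by
    have h1 := hdom w hw j
    have := hcon.trans_le h1
    exact lt_of_mul_lt_mul_right this hwpos.le
  -- matrix identities
  have hUw : Uᵀ *ᵥ w = 0 := by
    funext j; simpa [Matrix.mulVec, Matrix.transpose_apply] using hw j
  have hcross : ∀ e : Fin m → ℝ, (U *ᵥ e) ⬝ᵥ w = 0 := by
    intro e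
    rw [dotProduct_comm, dotProduct_mulVec, ← mulVec_transpose, hUw, zero_dotProduct]
  have hSU : Shat * U = U * diagonal θ := by
    ext i j
    rw [Matrix.mul_apply, Matrix.mul_diagonal]
    have h := congrFun (hθ j) i
    simp only [Matrix.mulVec, dotProduct, Pi.smul_apply, smul_eq_mul] at h
    exact h.trans (mul_comm _ _)
  have hSUc : ∀ e : Fin m → ℝ, Shat *ᵥ (U *ᵥ e) = U *ᵥ (fun j => θ j * e j) := by
    intro e
    have hde : (diagonal θ) *ᵥ e = fun j => θ j * e j := funext fun j => mulVec_diagonal θ e j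
    rw [mulVec_mulVec, hSU, ← mulVec_mulVec, hde]
    
  have hsym : ∀ x y : Fin d → ℝ, x ⬝ᵥ Shat *ᵥ y = (Shat *ᵥ x) ⬝ᵥ y := by
    intro x y
    rw [dotProduct_mulVec, ← mulVec_transpose, hShat.eq]
  -- kernel witness
  obtain ⟨c, t, hct, hMz⟩ := kernel_witness M hrank U w
  set z : Fin d → ℝ := U *ᵥ c + t • w with hz
  have hzne : z ≠ 0 := by
    intro h0
    have hUz : Uᵀ *ᵥ z = c := by
      rw [hz, mulVec_add, mulVec_smul, mulVec_mulVec, hUU, one_mulVec, hUw, smul_zero, add_zero]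
    have hc0 : c = 0 := by rw [← hUz, h0, mulVec_zero]
    have htw : t • w = 0 := by
      have := hz ▸ h0
      rwa [hc0, mulVec_zero, zero_add] at this
    rcases smul_eq_zero.mp htw with ht | hww
    · exact hct (by rw [hc0, ht]; rfl)
    · exact hw0 hww
  have hzpos : 0 < z ⬝ᵥ z := dot_self_pos hzne
  -- z⬝z
  have hwUc : ∀ e : Fin m → ℝ, w ⬝ᵥ (U *ᵥ e) = 0 := fun e => by
    rw [dotProduct_comm]; exact hcross e
  have hzz : z ⬝ᵥ z = c ⬝ᵥ c + t^2 * (w ⬝ᵥ w) := by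
    rw [hz]
    simp only [dotProduct_add, add_dotProduct, dotProduct_smul, smul_dotProduct, smul_eq_mul]
    rw [mulVec_U_dot U hUU, hcross c, hwUc c]
    ring
  -- z ⬝ Shat z
  have hzS : z ⬝ᵥ Shat *ᵥ z = c ⬝ᵥ (fun j => θ j * c j) + t^2 * (w ⬝ᵥ Shat *ᵥ w) := by
    have hSz : Shat *ᵥ z = U *ᵥ (fun j => θ j * c j) + t • (Shat *ᵥ w) := by
      rw [hz, mulVec_add, mulVec_smul, hSUc]
    rw [hz, hSz]
    simp only [dotProduct_add, add_dotProduct, dotProduct_smul, smul_dotProduct, smul_eq_mul]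
    rw [mulVec_U_dot U hUU]
    have h1 : (U *ᵥ c) ⬝ᵥ (Shat *ᵥ w) = 0 := by
      rw [hsym, hSUc]; exact hcross _
    rw [h1, hwUc]
    ring
  -- upper bound on z's Rayleigh quotient
  have hzSz_sub : z ⬝ᵥ (Shat - S) *ᵥ z = z ⬝ᵥ Shat *ᵥ z - z ⬝ᵥ S *ᵥ z := by
    rw [sub_mulVec, dotProduct_sub]
  have herr := err_bound (Shat - S) ε hop z
  have hzSz : z ⬝ᵥ S *ᵥ z = sbar2 * (z ⬝ᵥ z) := by
    rw [hS, add_mulVec, dotProduct_add, hMz, dotProduct_zero, smul_mulVec, one_mulVec,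
      dotProduct_smul, smul_eq_mul, zero_add]
  have hupper : z ⬝ᵥ Shat *ᵥ z ≤ s * (z ⬝ᵥ z) := by
    have := (abs_le.mp herr).2
    rw [hzSz_sub, hzSz] at this
    rw [hs]
    nlinarith [dot_self_nonneg' z]
  -- lower bound
  have hpart1le : s * (c ⬝ᵥ c) ≤ c ⬝ᵥ (fun j => θ j * c j) := by
    simp only [dotProduct, Finset.mul_sum]
    refine Finset.sum_le_sum fun j _ => ?_
    nlinarith [hθ' j, sq_nonneg (c j)]
  have hpart2le : s * (t^2 * (w ⬝ᵥ w)) ≤ t^2 * (w ⬝ᵥ Shat *ᵥ w) := by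
    have h := mul_le_mul_of_nonneg_left hcon.le (sq_nonneg t)
    calc s * (t^2 * (w ⬝ᵥ w)) = t^2 * (s * (w ⬝ᵥ w)) := by ring
      _ ≤ t^2 * (w ⬝ᵥ Shat *ᵥ w) := h
  have hlow : s * (z ⬝ᵥ z) < z ⬝ᵥ Shat *ᵥ z := by
    rw [hzz, hzS, mul_add]
    rcases (by
      by_contra hcc
      push_neg at hcc
      obtain ⟨hc, ht⟩ := hcc
      exact hct (Prod.ext (by simpa using hc) (by simpa using ht)) :
        c ≠ 0 ∨ t ≠ 0) with hc | ht
    · have hstrict : s * (c ⬝ᵥ c) < c ⬝ᵥ (fun j => θ j * c j) := by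
        obtain ⟨j0, hj0⟩ := Function.ne_iff.mp hc
        simp only [dotProduct, Finset.mul_sum]
        refine Finset.sum_lt_sum (fun j _ => by nlinarith [hθ' j, sq_nonneg (c j)])
          ⟨j0, Finset.mem_univ j0, ?_⟩
        have hpos : (0:ℝ) < c j0 * c j0 := mul_self_pos.mpr hj0
        nlinarith [hθ' j0]
      linarith
    · have ht2 : (0:ℝ) < t^2 := by positivity
      have hstrict : s * (t^2 * (w ⬝ᵥ w)) < t^2 * (w ⬝ᵥ Shat *ᵥ w) := by
        have h := mul_lt_mul_of_pos_left hcon ht2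
        calc s * (t^2 * (w ⬝ᵥ w)) = t^2 * (s * (w ⬝ᵥ w)) := by ring
          _ < t^2 * (w ⬝ᵥ Shat *ᵥ w) := h
      linarith
  linarith

/-- **Lemma on projections.** Let `M` be symmetric PSD of rank `r − 1` with
smallest nonzero eigenvalue `λ`, `S = M + σ̄² I` with `0 ≤ σ̄² ≤ σ_max²`, and `Ŝ` symmetric
with operator norm `‖Ŝ − S‖ ≤ ε`.  If `λ > 5(σ_max² + ε)` and `U` holds the top `r − 1`
eigenvectors of `Ŝ`, then `‖Uᵀ v‖ ≥ ‖v‖ / 2` for every `v` in the column span of `M`. -/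
theorem projection_preserves_norm {d r : ℕ}
    (M S Shat : Matrix (Fin d) (Fin d) ℝ)
    (hM : M.PosSemidef) (hrank : M.rank = r - 1)
    (lam : ℝ)
    (hlam : IsLeast {x : ℝ | x ≠ 0 ∧ ∃ i, hM.1.eigenvalues i = x} lam)
    (sbar2 smax2 ε : ℝ) (hsbar : 0 ≤ sbar2) (hsmax : sbar2 ≤ smax2)
    (hS : S = M + sbar2 • (1 : Matrix (Fin d) (Fin d) ℝ))
    (hShat : Shat.IsSymm)
    (hop : ∀ v : Fin d → ℝ,
      Real.sqrt ((Shat - S).mulVec v ⬝ᵥ (Shat - S).mulVec v) ≤ ε * Real.sqrt (v ⬝ᵥ v))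
    (hsep : 5 * (smax2 + ε) < lam)
    (U : Matrix (Fin d) (Fin (r - 1)) ℝ) (hU : IsTopEigenvectors Shat U) :
    ∀ v : Fin d → ℝ, (∃ w, M.mulVec w = v) →
      Real.sqrt (v ⬝ᵥ v) / 2 ≤ Real.sqrt (Uᵀ.mulVec v ⬝ᵥ Uᵀ.mulVec v) := by
  intro v hv
  obtain ⟨w0, hw0⟩ := hv
  by_cases hv0 : v = 0
  · simp only [hv0]
    rw [zero_dotProduct]
    simp [Real.sqrt_nonneg]
  have hvv : 0 < v ⬝ᵥ v := dot_self_pos hv0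
  have hsv : (0:ℝ) < Real.sqrt (v ⬝ᵥ v) := Real.sqrt_pos.mpr hvv
  have hε : 0 ≤ ε := by
    have h1 := hop v
    have h2 : (0:ℝ) ≤ Real.sqrt ((Shat - S) *ᵥ v ⬝ᵥ (Shat - S) *ᵥ v) := Real.sqrt_nonneg _
    nlinarith
  have hlam_pos : 0 < lam := by linarith
  have hgap : ∀ i, hM.1.eigenvalues i = 0 ∨ lam ≤ hM.1.eigenvalues i := by
    intro i
    by_cases h : hM.1.eigenvalues i = 0
    · exact Or.inl h
    · exact Or.inr (hlam.2 ⟨h, i, rfl⟩)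
  obtain ⟨hUU, θ, hθ, hdom⟩ := hU
  have hray := rayleigh_small M S Shat hrank sbar2 ε hS hShat hop U hUU θ hθ hdom
  set c : Fin (r-1) → ℝ := Uᵀ *ᵥ v with hc
  set a : Fin d → ℝ := U *ᵥ c with ha
  set b : Fin d → ℝ := v - a with hb
  -- b is orthogonal to columns of U
  have hUb : Uᵀ *ᵥ b = 0 := by
    rw [hb, mulVec_sub, ha, mulVec_mulVec, hUU, one_mulVec, sub_self]
  have hbU : ∀ j, (fun i => U i j) ⬝ᵥ b = 0 := by
    intro j
    have := congrFun hUb j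
    simpa [Matrix.mulVec, Matrix.transpose_apply] using this
  have f2 : b ⬝ᵥ Shat *ᵥ b ≤ (sbar2 + ε) * (b ⬝ᵥ b) := hray b hbU
  -- lower bound on b's Rayleigh quotient via M
  have herr := err_bound (Shat - S) ε hop b
  have hbS : b ⬝ᵥ S *ᵥ b = b ⬝ᵥ M *ᵥ b + sbar2 * (b ⬝ᵥ b) := by
    rw [hS, add_mulVec, dotProduct_add, smul_mulVec, one_mulVec, dotProduct_smul,
      smul_eq_mul]
  have hsub : b ⬝ᵥ (Shat - S) *ᵥ b = b ⬝ᵥ Shat *ᵥ b - b ⬝ᵥ S *ᵥ b := by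
    rw [sub_mulVec, dotProduct_sub]
  have f4 : b ⬝ᵥ M *ᵥ b ≤ 2 * ε * (b ⬝ᵥ b) := by
    have h1 := (abs_le.mp herr).1
    rw [hsub, hbS] at h1
    linarith
  -- dot product identities
  have hva : v ⬝ᵥ a = c ⬝ᵥ c := by
    rw [ha, dotProduct_mulVec, ← mulVec_transpose, ← hc]
  have haa : a ⬝ᵥ a = c ⬝ᵥ c := by rw [ha, mulVec_U_dot U hUU]
  have hav : a ⬝ᵥ v = c ⬝ᵥ c := by rw [dotProduct_comm]; exact hva
  have f5 : b ⬝ᵥ b = v ⬝ᵥ v - c ⬝ᵥ c := by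
    rw [hb]
    simp only [sub_dotProduct, dotProduct_sub]
    rw [hva, haa, hav]
    ring
  have f7 : b ⬝ᵥ v = v ⬝ᵥ v - c ⬝ᵥ c := by
    rw [hb, sub_dotProduct, hav]
  -- spectral lower bound
  have f6 := quad_lb hM hlam_pos hgap b w0
  rw [hw0, f7] at f6
  -- combine
  have hcc0 : 0 ≤ c ⬝ᵥ c := dot_self_nonneg' c
  have hbb0 : 0 ≤ b ⬝ᵥ b := dot_self_nonneg' b
  have hccv : c ⬝ᵥ c ≤ v ⬝ᵥ v := by linarith [f5 ▸ hbb0]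
  have hkey : v ⬝ᵥ v ≤ 4 * (c ⬝ᵥ c) := by
    by_contra hk
    push_neg at hk
    have h1 : 2 * lam * (v ⬝ᵥ v - c ⬝ᵥ c) ≤ 2 * ε * (b ⬝ᵥ b) + lam * (v ⬝ᵥ v) := by
      linarith
    rw [f5] at h1
    have h2 : 0 < v ⬝ᵥ v - 2 * (c ⬝ᵥ c) := by linarith
    have h3 : 0 < lam - 5 * ε := by linarith
    nlinarith [mul_pos h3 h2, mul_nonneg hε (by linarith : (0:ℝ) ≤ v ⬝ᵥ v - 4 * (c ⬝ᵥ c)),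
      mul_nonneg hε hcc0]
  -- conclude with square roots
  have hfin : Real.sqrt (v ⬝ᵥ v) ≤ 2 * Real.sqrt (c ⬝ᵥ c) := by
    have h1 : Real.sqrt (v ⬝ᵥ v) ≤ Real.sqrt (4 * (c ⬝ᵥ c)) := Real.sqrt_le_sqrt hkey
    rwa [show (4:ℝ) * (c ⬝ᵥ c) = (2:ℝ)^2 * (c ⬝ᵥ c) by ring, Real.sqrt_mul (by positivity),
      Real.sqrt_sq (by norm_num : (0:ℝ) ≤ 2)] at h1
  linarith
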